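/- (Theorem 3, part A.) Let c_1, c_2, ... be non-negative numbers with b_n := Σ_{i=1}^n c_i → ∞, set α_{in} = c_i / b_n, and suppose the measures α_n = Σ_{i=1}^n α_{in} δ_{i/n} on [0,1] converge weakly to a probability measure α with distribution function F. Suppose moreover that b_{n+1}/b_n → 1 as n → ∞. Then there exists ρ with 0 ≤ ρ ≤ ∞ such that F(x) = x^ρ for x ∈ [0,1] (with the conventions that if ρ = 0 then F(x) = 1 for all x ∈ (0,1], and if ρ = ∞ then F(x) = 0 for all x < 1 and F(1) = 1), and the piecewise-constant function b(t) defined by b(t) = b_n for t ∈ [n, n+1) is regularly varying: b(tx)/b(t) → x^ρ as t → ∞ for every x > 0 (interpreting x^∞ = 0 for x < 1 and = ∞ for x > 1). -/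

import Mathlib

open MeasureTheory Filter Topology ENNReal

namespace RVaux


/-- piecewise-linear ramp: 1 on `(-∞,u]`, 0 on `[v,∞)`. -/
noncomputable def ramp (u v t : ℝ) : ℝ := max 0 (min 1 ((v - t) / (v - u)))

lemma ramp_nonneg (u v t : ℝ) : 0 ≤ ramp u v t := le_max_left _ _

lemma ramp_le_one (u v t : ℝ) : ramp u v t ≤ 1 :=
  max_le zero_le_one (min_le_left _ _)

lemma ramp_continuous (u v : ℝ) : Continuous (ramp u v) := by
  unfold ramp
  exact continuous_const.max (continuous_const.min
    ((continuous_const.sub continuous_id).div_const _))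

lemma ramp_eq_one {u v : ℝ} (huv : u < v) {t : ℝ} (ht : t ≤ u) : ramp u v t = 1 := by
  have h1 : (1:ℝ) ≤ (v - t) / (v - u) := by
    rw [le_div_iff₀ (by linarith)]; linarith
  unfold ramp
  rw [min_eq_left h1, max_eq_right zero_le_one]

lemma ramp_eq_zero {u v : ℝ} (huv : u < v) {t : ℝ} (ht : v ≤ t) : ramp u v t = 0 := by
  have h1 : (v - t) / (v - u) ≤ 0 := div_nonpos_of_nonpos_of_nonneg (by linarith) (by linarith)
  unfold ramp
  rw [min_eq_right (h1.trans zero_le_one), max_eq_left h1]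

lemma ramp_lip {u v : ℝ} (huv : u < v) (t s : ℝ) :
    |ramp u v t - ramp u v s| ≤ |t - s| / (v - u) := by
  have h1 : |ramp u v t - ramp u v s| ≤
      |min 1 ((v - t) / (v - u)) - min 1 ((v - s) / (v - u))| := by
    unfold ramp
    rw [max_comm 0 (min 1 ((v - t) / (v - u))), max_comm 0 (min 1 ((v - s) / (v - u)))]
    exact abs_max_sub_max_le_abs _ _ 0
  have h2 : |min 1 ((v - t) / (v - u)) - min 1 ((v - s) / (v - u))| ≤
      |(v - t) / (v - u) - (v - s) / (v - u)| := by
    refine (abs_min_sub_min_le_max (1:ℝ) ((v - t) / (v - u)) 1 ((v - s) / (v - u))).trans ?_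
    simp
  have h3 : (v - t) / (v - u) - (v - s) / (v - u) = (s - t) / (v - u) := by
    rw [div_sub_div_same]; ring_nf
  refine (h1.trans h2).trans ?_
  rw [h3, abs_div, abs_of_pos (by linarith : (0:ℝ) < v - u), abs_sub_comm]

/-- `ramp u v` is bounded pointwise by the indicator of `Iic v`. -/
lemma ramp_le_indicator {u v : ℝ} (huv : u < v) (t : ℝ) :
    ramp u v t ≤ (Set.Iic v).indicator (fun _ => (1:ℝ)) t := by
  by_cases h : t ≤ v
  · simp only [Set.indicator_apply, Set.mem_Iic, if_pos h]; exact ramp_le_one _ _ _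
  · simp only [Set.indicator_apply, Set.mem_Iic, if_neg h]
    rw [ramp_eq_zero huv (le_of_not_ge h)]

lemma indicator_le_ramp {u v : ℝ} (huv : u < v) (t : ℝ) :
    (Set.Iic u).indicator (fun _ => (1:ℝ)) t ≤ ramp u v t := by
  by_cases h : t ≤ u
  · simp only [Set.indicator_apply, Set.mem_Iic, if_pos h]; rw [ramp_eq_one huv h]
  · simp only [Set.indicator_apply, Set.mem_Iic, if_neg h]; exact ramp_nonneg _ _ _

lemma ramp_integrable {u v : ℝ} (α : Measure ℝ) [IsProbabilityMeasure α] :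
    Integrable (ramp u v) α :=
  (integrable_const (1:ℝ)).mono' (ramp_continuous u v).aestronglyMeasurable
    (Eventually.of_forall (fun t => by
      rw [Real.norm_eq_abs, abs_of_nonneg (ramp_nonneg u v t)]
      simpa using ramp_le_one u v t))

lemma integral_ramp_le {u v : ℝ} (huv : u < v) (α : Measure ℝ) [IsProbabilityMeasure α] :
    ∫ t, ramp u v t ∂α ≤ (α (Set.Iic v)).toReal := by
  have := integral_mono (ramp_integrable (u := u) (v := v) α)
    ((integrable_const (1:ℝ)).indicator measurableSet_Iic) (ramp_le_indicator huv)
  calc ∫ t, ramp u v t ∂α ≤ ∫ t, (Set.Iic v).indicator (fun _ => (1:ℝ)) t ∂α := this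
    _ = (α (Set.Iic v)).toReal := by
        simpa [measureReal_def] using MeasureTheory.integral_indicator_one (μ := α) (measurableSet_Iic (a := v))

lemma le_integral_ramp {u v : ℝ} (huv : u < v) (α : Measure ℝ) [IsProbabilityMeasure α] :
    (α (Set.Iic u)).toReal ≤ ∫ t, ramp u v t ∂α := by
  have := integral_mono ((integrable_const (1:ℝ)).indicator measurableSet_Iic)
    (ramp_integrable (u := u) (v := v) α) (indicator_le_ramp huv)
  calc (α (Set.Iic u)).toReal = ∫ t, (Set.Iic u).indicator (fun _ => (1:ℝ)) t ∂α := by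
        simpa [measureReal_def] using (MeasureTheory.integral_indicator_one (μ := α) (measurableSet_Iic (a := u))).symm
    _ ≤ ∫ t, ramp u v t ∂α := this



variable {S : ℕ → ℝ}

lemma ratio_add (hmono : Monotone S) (hpos : ∀ᶠ n in atTop, 0 < S n)
    (hr : Tendsto (fun n => S (n + 1) / S n) atTop (𝓝 1)) (k : ℕ) :
    Tendsto (fun n => S (n + k) / S n) atTop (𝓝 1) := by
  induction k with
  | zero =>
    refine Tendsto.congr' ?_ tendsto_const_nhds
    filter_upwards [hpos] with n hn
    simp [div_self hn.ne']
  | succ k ih =>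
    have h1 : Tendsto (fun n => S (n + k + 1) / S (n + k)) atTop (𝓝 1) := by
      have := hr.comp (tendsto_add_atTop_nat k)
      simpa [Function.comp_def] using this
    have := (h1.mul ih)
    rw [one_mul] at this
    refine Tendsto.congr' ?_ this
    filter_upwards [hpos] with n hn
    have hk : 0 < S (n + k) := lt_of_lt_of_le hn (hmono (Nat.le_add_right n k))
    rw [show n + (k + 1) = n + k + 1 from rfl]
    field_simp

lemma ratio_sandwich {ι : Type*} {l : Filter ι} (hmono : Monotone S)
    (hpos : ∀ᶠ n in atTop, 0 < S n)
    (hr : Tendsto (fun n => S (n + 1) / S n) atTop (𝓝 1))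
    {u v : ι → ℕ} {k : ℕ} (hu : Tendsto u l atTop)
    (hle : ∀ᶠ i in l, u i ≤ v i) (hge : ∀ᶠ i in l, v i ≤ u i + k) :
    Tendsto (fun i => S (v i) / S (u i)) l (𝓝 1) := by
  have hup : ∀ᶠ i in l, 0 < S (u i) := hu.eventually hpos
  have htop : Tendsto (fun i => S (u i + k) / S (u i)) l (𝓝 1) := by
    have := (ratio_add hmono hpos hr k).comp hu
    simpa [Function.comp_def] using this
  refine tendsto_of_tendsto_of_tendsto_of_le_of_le' tendsto_const_nhds htop ?_ ?_
  · filter_upwards [hup, hle] with i h1 h2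
    rw [le_div_iff₀ h1, one_mul]
    exact hmono h2
  · filter_upwards [hup, hge] with i h1 h2
    gcongr
    exact hmono h2
    


/-- A monotone multiplicative function on `(0,1)` with positive values `≤ 1` is a power. -/
lemma mul_to_rpow (φ : ℝ → ℝ)
    (hmono : ∀ a b : ℝ, a ∈ Set.Ioo (0:ℝ) 1 → b ∈ Set.Ioo (0:ℝ) 1 → a ≤ b → φ a ≤ φ b)
    (hpos : ∀ a ∈ Set.Ioo (0:ℝ) 1, 0 < φ a)
    (hle1 : ∀ a ∈ Set.Ioo (0:ℝ) 1, φ a ≤ 1)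
    (hmul : ∀ a ∈ Set.Ioo (0:ℝ) 1, ∀ b ∈ Set.Ioo (0:ℝ) 1, φ (a * b) = φ a * φ b) :
    ∃ ρ₀ : ℝ, 0 ≤ ρ₀ ∧ ∀ a ∈ Set.Ioo (0:ℝ) 1, φ a = a ^ ρ₀ := by
  have hexp : ∀ u : ℝ, 0 < u → Real.exp (-u) ∈ Set.Ioo (0:ℝ) 1 := by
    intro u hu
    exact ⟨Real.exp_pos _, by rw [Real.exp_lt_one_iff]; linarith⟩
  set G : ℝ → ℝ := fun u => -Real.log (φ (Real.exp (-u))) with hG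
  have hGadd : ∀ u v : ℝ, 0 < u → 0 < v → G (u + v) = G u + G v := by
    intro u v hu hv
    have h1 : Real.exp (-(u + v)) = Real.exp (-u) * Real.exp (-v) := by
      rw [← Real.exp_add]; ring_nf
    simp only [hG, h1, hmul _ (hexp u hu) _ (hexp v hv)]
    rw [Real.log_mul (hpos _ (hexp u hu)).ne' (hpos _ (hexp v hv)).ne']
    ring
  have hGmono : ∀ u v : ℝ, 0 < u → u ≤ v → G u ≤ G v := by
    intro u v hu huv
    have hv : 0 < v := lt_of_lt_of_le hu huv
    have h1 : Real.exp (-v) ≤ Real.exp (-u) := Real.exp_le_exp.2 (by linarith)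
    have h2 := hmono _ _ (hexp v hv) (hexp u hu) h1
    have h3 := Real.log_le_log (hpos _ (hexp v hv)) h2
    simp only [hG]; linarith
  have hGnonneg : ∀ u : ℝ, 0 < u → 0 ≤ G u := by
    intro u hu
    have := Real.log_nonpos (hpos _ (hexp u hu)).le (hle1 _ (hexp u hu))
    simp only [hG]; linarith
  have hGnat : ∀ j : ℕ, ∀ u : ℝ, 0 < u → G ((j + 1 : ℕ) * u) = (j + 1 : ℕ) * G u := by
    intro j
    induction j with
    | zero => intro u hu; simp
    | succ j ih =>
      intro u hu
      have h1 : ((j + 1 + 1 : ℕ) : ℝ) * u = ((j + 1 : ℕ) : ℝ) * u + u := by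
        push_cast; ring
      rw [h1, hGadd _ _ (by positivity) hu, ih u hu]
      push_cast; ring
  set ρ₀ := G 1 with hρ₀
  have hρ₀nonneg : 0 ≤ ρ₀ := hGnonneg 1 one_pos
  have hGrat : ∀ q : ℚ, 0 < q → G q = ρ₀ * q := by
    intro q hq
    have hq' : (0:ℝ) < q := by exact_mod_cast hq
    obtain ⟨b', hb'⟩ : ∃ b', q.den = b' + 1 := ⟨q.den - 1, by have := q.pos; omega⟩
    obtain ⟨a', ha'⟩ : ∃ a', q.num.toNat = a' + 1 := by
      have h1 : 0 < q.num := Rat.num_pos.2 hq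
      exact ⟨q.num.toNat - 1, by omega⟩
    have h2 : ((b' + 1 : ℕ) : ℝ) * (q : ℝ) = ((a' + 1 : ℕ) : ℝ) := by
      rw [← hb', ← ha']
      have h3 : ((q.den : ℝ)) * q = q.num := by
        rw [mul_comm]; exact_mod_cast Rat.mul_den_eq_num q
      rw [h3]
      have h4 : 0 < q.num := Rat.num_pos.2 hq
      exact_mod_cast (Int.toNat_of_nonneg h4.le).symm
    have h1 : G (((b' + 1 : ℕ) : ℝ) * (q:ℝ)) = ((b' + 1 : ℕ) : ℝ) * G q := hGnat b' q hq'
    have h3 : G (((a' + 1 : ℕ) : ℝ)) = ((a' + 1 : ℕ) : ℝ) * G 1 := by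
      have := hGnat a' 1 one_pos
      rwa [mul_one] at this
    rw [h2, h3] at h1
    have hbne : ((b' + 1 : ℕ) : ℝ) ≠ 0 := by positivity
    apply mul_left_cancel₀ hbne
    rw [← h1, hρ₀]
    rw [show ((b' + 1 : ℕ) : ℝ) * (G 1 * q) = G 1 * (((b' + 1 : ℕ) : ℝ) * q) by ring, h2]
    ring
  have hGlin : ∀ u : ℝ, 0 < u → G u = ρ₀ * u := by
    intro u hu
    have hub : ∀ ε : ℝ, 0 < ε → G u ≤ ρ₀ * u + ρ₀ * ε := by
      intro ε hε
      obtain ⟨q, hq1, hq2⟩ := exists_rat_btwn (lt_add_of_pos_right u hε)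
      have hq0 : (0:ℚ) < q := by
        have : (0:ℝ) < q := lt_trans hu hq1
        exact_mod_cast this
      calc G u ≤ G q := hGmono u q hu hq1.le
        _ = ρ₀ * q := hGrat q hq0
        _ ≤ ρ₀ * (u + ε) := by nlinarith
        _ = ρ₀ * u + ρ₀ * ε := by ring
    have hlb : ∀ ε : ℝ, 0 < ε → ε < u → ρ₀ * u ≤ G u + ρ₀ * ε := by
      intro ε hε hεu
      obtain ⟨q, hq1, hq2⟩ := exists_rat_btwn (show u - ε < u by linarith)
      have hq0 : (0:ℚ) < q := by
        have : (0:ℝ) < q := lt_of_lt_of_le (by linarith) hq1.le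
        exact_mod_cast this
      have := hGrat q hq0
      have h5 := hGmono q u (by exact_mod_cast hq0) hq2.le
      nlinarith
    rcases eq_or_lt_of_le hρ₀nonneg with h0 | h0
    · have h1 := hub 1 one_pos
      have h2 := hGnonneg u hu
      rw [← h0] at h1 ⊢
      simp at h1 ⊢
      linarith
    · apply le_antisymm
      · apply _root_.le_of_forall_pos_le_add
        intro ε hε
        calc G u ≤ ρ₀ * u + ρ₀ * (ε / ρ₀) := hub (ε / ρ₀) (by positivity)
          _ = ρ₀ * u + ε := by field_simp
      · apply _root_.le_of_forall_pos_le_add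
        intro ε hε
        set ε' := min (ε / ρ₀) (u / 2) with hε'
        have hε'pos : 0 < ε' := lt_min (by positivity) (by positivity)
        have hε'u : ε' < u := lt_of_le_of_lt (min_le_right _ _) (by linarith)
        calc ρ₀ * u ≤ G u + ρ₀ * ε' := hlb ε' hε'pos hε'u
          _ ≤ G u + ρ₀ * (ε / ρ₀) := by
              have h6 : ε' ≤ ε / ρ₀ := min_le_left _ _
              have := mul_le_mul_of_nonneg_left h6 hρ₀nonneg
              linarith
          _ = G u + ε := by field_simp
  refine ⟨ρ₀, hρ₀nonneg, ?_⟩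
  intro a ha
  have hla : Real.log a < 0 := Real.log_neg ha.1 ha.2
  have h1 : Real.exp (-(-Real.log a)) = a := by
    rw [neg_neg, Real.exp_log ha.1]
  have h2 := hGlin (-Real.log a) (by linarith)
  simp only [hG] at h2
  rw [h1] at h2
  have h3 : Real.log (φ a) = ρ₀ * Real.log a := by linarith
  have h4 : φ a = Real.exp (Real.log (φ a)) := (Real.exp_log (hpos a ha)).symm
  rw [h4, h3, Real.rpow_def_of_pos ha.1]
  ring_nf



lemma ramp_abs_le_one (u v t : ℝ) : |ramp u v t| ≤ 1 := by
  rw [abs_of_nonneg (ramp_nonneg u v t)]; exact ramp_le_one u v t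

noncomputable def PS (c : ℕ → ℝ) (n : ℕ) : ℝ := ∑ i ∈ Finset.Icc 1 n, c i

lemma key_conv {c : ℕ → ℝ} (hc : ∀ i, 0 ≤ c i)
    (hSpos : ∀ᶠ n : ℕ in atTop, 0 < PS c n)
    {u₀ v₀ : ℝ} (hv1 : v₀ < 1) (huv : u₀ < v₀)
    (α : Measure ℝ) [IsProbabilityMeasure α]
    (hweak : ∀ h : ℝ → ℝ, Continuous h → (∃ C, ∀ x, |h x| ≤ C) →
      Tendsto (fun n : ℕ => ∑ i ∈ Finset.Icc 1 n,
          h ((i : ℝ) / (n : ℝ)) * (c i / PS c n)) atTop (𝓝 (∫ x, h x ∂α)))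
    (hIpos : 0 < ∫ t, ramp u₀ v₀ t ∂α)
    {l : ℝ} (hl0 : 0 < l) (hl1 : l < 1) :
    Tendsto (fun n : ℕ => PS c ⌊(n : ℝ) * l⌋₊ / PS c n) atTop
      (𝓝 ((∫ t, ramp u₀ v₀ (t / l) ∂α) / ∫ t, ramp u₀ v₀ t ∂α)) := by
  set m : ℕ → ℕ := fun n => ⌊(n : ℝ) * l⌋₊ with hmdef
  have hmtop : Tendsto m atTop atTop :=
    tendsto_nat_floor_atTop.comp (Tendsto.atTop_mul_const hl0 tendsto_natCast_atTop_atTop)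
  have hmn : ∀ n : ℕ, m n ≤ n := by
    intro n
    calc ⌊(n : ℝ) * l⌋₊ ≤ ⌊(n : ℝ)⌋₊ := by
          apply Nat.floor_le_floor
          nlinarith [Nat.cast_nonneg (α := ℝ) n]
      _ = n := Nat.floor_natCast n
  have hml : ∀ n : ℕ, (m n : ℝ) ≤ (n : ℝ) * l := fun n => Nat.floor_le (by positivity)
  have hml2 : ∀ n : ℕ, (n : ℝ) * l < (m n : ℝ) + 1 := fun n => Nat.lt_floor_add_one _
  set J : ℕ → ℝ := fun n => ∑ i ∈ Finset.Icc 1 (m n),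
    ramp u₀ v₀ ((i : ℝ) / ((m n : ℕ) : ℝ)) * (c i / PS c (m n)) with hJdef
  set K : ℕ → ℝ := fun n => ∑ i ∈ Finset.Icc 1 (m n),
    ramp u₀ v₀ ((i : ℝ) / ((n : ℝ) * l)) * (c i / PS c (m n)) with hKdef
  have hJ : Tendsto J atTop (𝓝 (∫ t, ramp u₀ v₀ t ∂α)) :=
    (hweak _ (ramp_continuous u₀ v₀) ⟨1, ramp_abs_le_one u₀ v₀⟩).comp hmtop
  have hd : (0:ℝ) < v₀ - u₀ := by linarith
  -- |K n - J n| ≤ ((n l)(v₀-u₀))⁻¹ eventually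
  have hbound : ∀ᶠ n : ℕ in atTop, |K n - J n| ≤ ((n : ℝ) * l * (v₀ - u₀))⁻¹ := by
    filter_upwards [hmtop.eventually hSpos, hmtop.eventually (eventually_ge_atTop 1),
      eventually_ge_atTop 1] with n hSm hm1 hn1
    have hnl : (0:ℝ) < (n : ℝ) * l := by
      have : (1:ℝ) ≤ n := by exact_mod_cast hn1
      nlinarith
    have hmpos : (0:ℝ) < (m n : ℝ) := by exact_mod_cast hm1
    have hsub : K n - J n = ∑ i ∈ Finset.Icc 1 (m n),
        (ramp u₀ v₀ ((i : ℝ) / ((n : ℝ) * l)) - ramp u₀ v₀ ((i : ℝ) / ((m n : ℕ) : ℝ)))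
          * (c i / PS c (m n)) := by
      rw [hKdef, hJdef]
      rw [← Finset.sum_sub_distrib]
      exact Finset.sum_congr rfl (fun i _ => by ring)
    rw [hsub]
    set B := ((n : ℝ) * l * (v₀ - u₀))⁻¹ with hBdef
    have hterm : ∀ i ∈ Finset.Icc 1 (m n),
        |(ramp u₀ v₀ ((i : ℝ) / ((n : ℝ) * l)) - ramp u₀ v₀ ((i : ℝ) / ((m n : ℕ) : ℝ)))
          * (c i / PS c (m n))| ≤ B * (c i / PS c (m n)) := by
      intro i hi
      rw [Finset.mem_Icc] at hi
      have hwnn : 0 ≤ c i / PS c (m n) := div_nonneg (hc i) hSm.le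
      rw [abs_mul, abs_of_nonneg hwnn]
      apply mul_le_mul_of_nonneg_right _ hwnn
      refine (ramp_lip huv _ _).trans ?_
      have hile : (i : ℝ) ≤ (m n : ℝ) := by exact_mod_cast hi.2
      have hinn : (0:ℝ) ≤ i := Nat.cast_nonneg i
      have hab : (i : ℝ) / ((n : ℝ) * l) ≤ (i : ℝ) / (m n : ℝ) :=
        div_le_div_of_nonneg_left hinn hmpos (hml n)
      have habs : |(i : ℝ) / ((n : ℝ) * l) - (i : ℝ) / ((m n : ℕ) : ℝ)| =
          (i : ℝ) / (m n : ℝ) - (i : ℝ) / ((n : ℝ) * l) := by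
        rw [abs_sub_comm, abs_of_nonneg (by linarith)]
      rw [habs]
      have hkey : (i : ℝ) / (m n : ℝ) - (i : ℝ) / ((n : ℝ) * l) ≤ ((n : ℝ) * l)⁻¹ := by
        have e1 : (i : ℝ) / (m n : ℝ) - (i : ℝ) / ((n : ℝ) * l) =
            (i : ℝ) * ((n : ℝ) * l - (m n : ℝ)) / ((m n : ℝ) * ((n : ℝ) * l)) := by
          field_simp
        rw [e1]
        have hnum : (i : ℝ) * ((n : ℝ) * l - (m n : ℝ)) ≤ (m n : ℝ) := by
          nlinarith [hml n, hml2 n]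
        calc (i : ℝ) * ((n : ℝ) * l - (m n : ℝ)) / ((m n : ℝ) * ((n : ℝ) * l))
            ≤ (m n : ℝ) / ((m n : ℝ) * ((n : ℝ) * l)) := by
              apply div_le_div_of_nonneg_right hnum (by positivity : (0:ℝ) ≤ (m n : ℝ) * ((n:ℝ)*l)) |>.trans_eq rfl
          _ = ((n : ℝ) * l)⁻¹ := by
              field_simp
      calc ((i : ℝ) / (m n : ℝ) - (i : ℝ) / ((n : ℝ) * l)) / (v₀ - u₀)
          ≤ ((n : ℝ) * l)⁻¹ / (v₀ - u₀) := by
            apply div_le_div_of_nonneg_right hkey hd.le |>.trans_eq rfl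
        _ = B := by rw [hBdef, mul_inv ((n:ℝ)*l) (v₀-u₀), ← div_eq_mul_inv]
    have hsumw : ∑ i ∈ Finset.Icc 1 (m n), c i / PS c (m n) = 1 := by
      rw [← Finset.sum_div]
      exact div_self hSm.ne'
    calc |∑ i ∈ Finset.Icc 1 (m n),
        (ramp u₀ v₀ ((i : ℝ) / ((n : ℝ) * l)) - ramp u₀ v₀ ((i : ℝ) / ((m n : ℕ) : ℝ)))
          * (c i / PS c (m n))|
        ≤ ∑ i ∈ Finset.Icc 1 (m n),
          |(ramp u₀ v₀ ((i : ℝ) / ((n : ℝ) * l)) - ramp u₀ v₀ ((i : ℝ) / ((m n : ℕ) : ℝ)))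
            * (c i / PS c (m n))| := Finset.abs_sum_le_sum_abs _ _
      _ ≤ ∑ i ∈ Finset.Icc 1 (m n), B * (c i / PS c (m n)) := Finset.sum_le_sum hterm
      _ = B * ∑ i ∈ Finset.Icc 1 (m n), c i / PS c (m n) := by rw [Finset.mul_sum]
      _ = B := by rw [hsumw, mul_one]
  have hB0 : Tendsto (fun n : ℕ => ((n : ℝ) * l * (v₀ - u₀))⁻¹) atTop (𝓝 0) :=
    tendsto_inv_atTop_zero.comp
      ((Tendsto.atTop_mul_const hl0 tendsto_natCast_atTop_atTop).atTop_mul_const hd)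
  have hKJ : Tendsto (fun n => K n - J n) atTop (𝓝 0) := by
    have hBneg : Tendsto (fun n : ℕ => -((n : ℝ) * l * (v₀ - u₀))⁻¹) atTop (𝓝 0) := by
      simpa using hB0.neg
    refine tendsto_of_tendsto_of_tendsto_of_le_of_le' hBneg hB0 ?_ ?_
    · filter_upwards [hbound] with n hn
      linarith [abs_le.1 hn |>.1]
    · filter_upwards [hbound] with n hn
      linarith [abs_le.1 hn |>.2]
  have hK : Tendsto K atTop (𝓝 (∫ t, ramp u₀ v₀ t ∂α)) := by
    have := hKJ.add hJ
    rw [zero_add] at this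
    refine this.congr (fun n => by ring)
  have hKpos : ∀ᶠ n in atTop, 0 < K n := hK.eventually_const_lt hIpos
  have hgc : Continuous (fun t : ℝ => ramp u₀ v₀ (t / l)) :=
    (ramp_continuous u₀ v₀).comp (continuous_id.div_const l)
  have hAg : Tendsto (fun n : ℕ => ∑ i ∈ Finset.Icc 1 n,
      ramp u₀ v₀ (((i : ℝ) / (n : ℝ)) / l) * (c i / PS c n)) atTop
      (𝓝 (∫ t, ramp u₀ v₀ (t / l) ∂α)) :=
    hweak _ hgc ⟨1, fun x => ramp_abs_le_one u₀ v₀ _⟩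
  have hident : ∀ᶠ n : ℕ in atTop,
      (∑ i ∈ Finset.Icc 1 n, ramp u₀ v₀ (((i : ℝ) / (n : ℝ)) / l) * (c i / PS c n)) / K n
        = PS c (m n) / PS c n := by
    filter_upwards [hSpos, hmtop.eventually hSpos, hKpos, eventually_ge_atTop 1]
      with n hSn hSm hKn hn1
    have hnl : (0:ℝ) < (n : ℝ) * l := by
      have : (1:ℝ) ≤ n := by exact_mod_cast hn1
      nlinarith
    have htrunc : ∑ i ∈ Finset.Icc 1 n, ramp u₀ v₀ (((i : ℝ) / (n : ℝ)) / l) * (c i / PS c n)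
        = ∑ i ∈ Finset.Icc 1 (m n), ramp u₀ v₀ ((i : ℝ) / ((n : ℝ) * l)) * (c i / PS c n) := by
      rw [← Finset.sum_subset (Finset.Icc_subset_Icc_right (hmn n))]
      · exact Finset.sum_congr rfl (fun i _ => by rw [div_div])
      · intro i hi hni
        rw [Finset.mem_Icc] at hi hni
        have h1 : m n < i := by omega
        have h2 : (n : ℝ) * l < i := by
          calc (n : ℝ) * l < (m n : ℝ) + 1 := hml2 n
            _ ≤ i := by exact_mod_cast h1
        have h3 : (1:ℝ) < (i : ℝ) / ((n : ℝ) * l) := (one_lt_div hnl).2 h2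
        rw [div_div, ramp_eq_zero huv (by linarith), zero_mul]
    have hstep2 : ∑ i ∈ Finset.Icc 1 (m n), ramp u₀ v₀ ((i : ℝ) / ((n : ℝ) * l)) * (c i / PS c n)
        = (PS c (m n) / PS c n) * K n := by
      rw [hKdef, Finset.mul_sum]
      apply Finset.sum_congr rfl
      intro i hi
      field_simp
    rw [htrunc, hstep2, mul_div_assoc, div_self hKn.ne', mul_one]
  exact (hAg.div hK hIpos.ne').congr' hident


lemma PS_nonneg {c : ℕ → ℝ} (hc : ∀ i, 0 ≤ c i) (n : ℕ) : 0 ≤ PS c n :=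
  Finset.sum_nonneg fun i _ => hc i

lemma PS_mono {c : ℕ → ℝ} (hc : ∀ i, 0 ≤ c i) : Monotone (PS c) := fun a b h =>
  Finset.sum_le_sum_of_subset_of_nonneg (Finset.Icc_subset_Icc_right h) (fun i _ _ => hc i)

lemma floor_add_le_aux {a b : ℝ} (ha : 0 ≤ a) (hb : 0 ≤ b) : ⌊a + b⌋₊ ≤ ⌊a⌋₊ + ⌊b⌋₊ + 1 := by
  have h1 : a + b < ((⌊a⌋₊ + ⌊b⌋₊ + 2 : ℕ) : ℝ) := by
    push_cast
    have h2 := Nat.lt_floor_add_one a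
    have h3 := Nat.lt_floor_add_one b
    linarith
  have := (Nat.floor_lt (by positivity)).2 h1
  omega


variable {c : ℕ → ℝ}

lemma sum_ramp_lower (hc : ∀ i, 0 ≤ c i) {n : ℕ} (hn : 1 ≤ n) {u v : ℝ}
    (hu : 0 < u) (huv : u < v) (hu1 : u ≤ 1) :
    ∑ i ∈ Finset.Icc 1 ⌊(n : ℝ) * u⌋₊, c i ≤
      ∑ i ∈ Finset.Icc 1 n, ramp u v ((i : ℝ) / n) * c i := by
  have hn0 : (0:ℝ) < n := by exact_mod_cast hn
  have hmn : ⌊(n : ℝ) * u⌋₊ ≤ n := by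
    calc ⌊(n : ℝ) * u⌋₊ ≤ ⌊(n : ℝ)⌋₊ := Nat.floor_le_floor (by nlinarith)
      _ = n := Nat.floor_natCast n
  have heq : ∀ i ∈ Finset.Icc 1 ⌊(n : ℝ) * u⌋₊, c i = ramp u v ((i : ℝ) / n) * c i := by
    intro i hi
    rw [Finset.mem_Icc] at hi
    have h1 : (i : ℝ) ≤ (n : ℝ) * u := le_trans (by exact_mod_cast hi.2)
      (Nat.floor_le (by positivity))
    have h2 : (i : ℝ) / n ≤ u := by rw [div_le_iff₀ hn0]; linarith
    rw [ramp_eq_one huv h2, one_mul]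
  rw [Finset.sum_congr rfl heq]
  refine Finset.sum_le_sum_of_subset_of_nonneg (Finset.Icc_subset_Icc_right hmn) ?_
  intro i _ _
  exact mul_nonneg (ramp_nonneg _ _ _) (hc i)

lemma sum_ramp_upper (hc : ∀ i, 0 ≤ c i) {n : ℕ} (hn : 1 ≤ n) {u v : ℝ}
    (hv : 0 < v) (huv : u < v) :
    ∑ i ∈ Finset.Icc 1 n, ramp u v ((i : ℝ) / n) * c i ≤
      ∑ i ∈ Finset.Icc 1 ⌊(n : ℝ) * v⌋₊, c i := by
  have hn0 : (0:ℝ) < n := by exact_mod_cast hn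
  set m := ⌊(n : ℝ) * v⌋₊ with hm
  have step1 : ∀ i ∈ Finset.Icc 1 n,
      ramp u v ((i : ℝ) / n) * c i ≤ if i ≤ m then c i else 0 := by
    intro i hi
    by_cases h : i ≤ m
    · rw [if_pos h]
      calc ramp u v ((i : ℝ) / n) * c i ≤ 1 * c i :=
        mul_le_mul_of_nonneg_right (ramp_le_one _ _ _) (hc i)
        _ = c i := one_mul _
    · rw [if_neg h]
      have h1 : (n : ℝ) * v < i := by
        have h2 : m + 1 ≤ i := Nat.succ_le_of_lt (Nat.lt_of_not_le h)
        calc (n:ℝ) * v < (m:ℝ) + 1 := Nat.lt_floor_add_one _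
          _ ≤ i := by exact_mod_cast Nat.succ_le_of_lt (Nat.lt_of_not_le h)
      have h2 : v ≤ (i : ℝ) / n := by rw [le_div_iff₀ hn0]; linarith
      rw [ramp_eq_zero huv h2, zero_mul]
  calc ∑ i ∈ Finset.Icc 1 n, ramp u v ((i : ℝ) / n) * c i
      ≤ ∑ i ∈ Finset.Icc 1 n, (if i ≤ m then c i else 0) := Finset.sum_le_sum step1
    _ = ∑ i ∈ (Finset.Icc 1 n).filter (· ≤ m), c i := (Finset.sum_filter _ _).symm
    _ = ∑ i ∈ Finset.Icc 1 (min n m), c i := by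
        apply Finset.sum_congr _ (fun _ _ => rfl)
        ext i
        simp only [Finset.mem_filter, Finset.mem_Icc, le_min_iff]
        omega
    _ ≤ ∑ i ∈ Finset.Icc 1 m, c i := by
        refine Finset.sum_le_sum_of_subset_of_nonneg
          (Finset.Icc_subset_Icc_right (min_le_right _ _)) (fun i _ _ => hc i)


end RVaux
open RVaux in
/-- **Theorem 3, part A.** -/
theorem limit_cdf_is_power_and_b_regularly_varying
    (c : ℕ → ℝ) (hc : ∀ i, 0 ≤ c i)
    (hb : Tendsto (fun n : ℕ => ∑ i ∈ Finset.Icc 1 n, c i) atTop atTop)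
    (hratio : Tendsto (fun n : ℕ =>
        (∑ i ∈ Finset.Icc 1 (n + 1), c i) / ∑ i ∈ Finset.Icc 1 n, c i)
      atTop (𝓝 1))
    (α : Measure ℝ) [IsProbabilityMeasure α] (hα_supp : α (Set.Icc 0 1) = 1)
    (hweak : ∀ h : ℝ → ℝ, Continuous h → (∃ C, ∀ x, |h x| ≤ C) →
      Tendsto (fun n : ℕ => ∑ i ∈ Finset.Icc 1 n,
          h ((i : ℝ) / (n : ℝ)) * (c i / ∑ j ∈ Finset.Icc 1 n, c j))
        atTop (𝓝 (∫ x, h x ∂α))) :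
    ∃ ρ : ℝ≥0∞,
      (ρ ≠ ∞ →
        (∀ x : ℝ, x ∈ Set.Ioc (0 : ℝ) 1 → (α (Set.Iic x)).toReal = x ^ ρ.toReal) ∧
        (∀ x : ℝ, 0 < x →
          Tendsto (fun t : ℝ =>
              (∑ i ∈ Finset.Icc 1 ⌊t * x⌋₊, c i) / ∑ i ∈ Finset.Icc 1 ⌊t⌋₊, c i)
            atTop (𝓝 (x ^ ρ.toReal)))) ∧
      (ρ = ∞ →
        (∀ x : ℝ, x ∈ Set.Ico (0 : ℝ) 1 → (α (Set.Iic x)).toReal = 0) ∧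
        (∀ x : ℝ, x ∈ Set.Ioo (0 : ℝ) 1 →
          Tendsto (fun t : ℝ =>
              (∑ i ∈ Finset.Icc 1 ⌊t * x⌋₊, c i) / ∑ i ∈ Finset.Icc 1 ⌊t⌋₊, c i)
            atTop (𝓝 0)) ∧
        (∀ x : ℝ, 1 < x →
          Tendsto (fun t : ℝ =>
              (∑ i ∈ Finset.Icc 1 ⌊t * x⌋₊, c i) / ∑ i ∈ Finset.Icc 1 ⌊t⌋₊, c i)
            atTop atTop)) := by
  classical
  -- basic notation
  set F : ℝ → ℝ := fun x => (α (Set.Iic x)).toReal with hFdef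
  have hFmono : ∀ u v : ℝ, u ≤ v → F u ≤ F v := fun u v h =>
    ENNReal.toReal_mono (measure_ne_top α _) (measure_mono (Set.Iic_subset_Iic.2 h))
  have hFnonneg : ∀ x : ℝ, 0 ≤ F x := fun x => ENNReal.toReal_nonneg
  have hSpos : ∀ᶠ n : ℕ in atTop, 0 < PS c n := hb.eventually (eventually_gt_atTop 0)
  have hSmono : Monotone (PS c) := PS_mono hc
  have hr : Tendsto (fun n : ℕ => PS c (n + 1) / PS c n) atTop (𝓝 1) := hratio
  have hweak' : ∀ h : ℝ → ℝ, Continuous h → (∃ C, ∀ x, |h x| ≤ C) →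
      Tendsto (fun n : ℕ => ∑ i ∈ Finset.Icc 1 n,
        h ((i : ℝ) / (n : ℝ)) * (c i / PS c n)) atTop (𝓝 (∫ x, h x ∂α)) := hweak
  -- bounds on the weak-convergence sums by partial-sum ratios
  have hAnbounds : ∀ u v : ℝ, 0 < u → u < v → u ≤ 1 → ∀ᶠ n : ℕ in atTop,
      PS c ⌊(n : ℝ) * u⌋₊ / PS c n ≤
        (∑ i ∈ Finset.Icc 1 n, ramp u v ((i : ℝ) / (n : ℝ)) * (c i / PS c n)) ∧
      (∑ i ∈ Finset.Icc 1 n, ramp u v ((i : ℝ) / (n : ℝ)) * (c i / PS c n)) ≤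
        PS c ⌊(n : ℝ) * v⌋₊ / PS c n := by
    intro u v hu huv hu1
    filter_upwards [hSpos, eventually_ge_atTop 1] with n hSn hn1
    have hsum_eq : (∑ i ∈ Finset.Icc 1 n, ramp u v ((i : ℝ) / (n : ℝ)) * (c i / PS c n)) =
        (∑ i ∈ Finset.Icc 1 n, ramp u v ((i : ℝ) / (n : ℝ)) * c i) / PS c n := by
      rw [Finset.sum_div]
      exact Finset.sum_congr rfl fun i _ => (mul_div_assoc _ _ _).symm
    constructor
    · rw [hsum_eq]
      exact div_le_div_of_nonneg_right (sum_ramp_lower hc hn1 hu huv hu1) hSn.le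
    · rw [hsum_eq]
      exact div_le_div_of_nonneg_right (sum_ramp_upper hc hn1 (lt_trans hu huv) huv) hSn.le
  have hIr : ∀ u v : ℝ, u < v →
      Tendsto (fun n : ℕ => ∑ i ∈ Finset.Icc 1 n,
        ramp u v ((i : ℝ) / (n : ℝ)) * (c i / PS c n)) atTop (𝓝 (∫ t, ramp u v t ∂α)) :=
    fun u v huv => hweak' _ (ramp_continuous u v) ⟨1, ramp_abs_le_one u v⟩
  by_cases hA : ∃ u, u ∈ Set.Ioo (0 : ℝ) 1 ∧ 0 < F u
  · -- CASE A : finite index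
    obtain ⟨u₀, hu₀, hFu₀⟩ := hA
    set v₀ : ℝ := (u₀ + 1) / 2 with hv₀def
    have huv₀ : u₀ < v₀ := by rw [hv₀def]; linarith [hu₀.2]
    have hv₀1 : v₀ < 1 := by rw [hv₀def]; linarith [hu₀.2]
    have hIpos : 0 < ∫ t, ramp u₀ v₀ t ∂α :=
      lt_of_lt_of_le hFu₀ (le_integral_ramp huv₀ α)
    set φ : ℝ → ℝ := fun l => (∫ t, ramp u₀ v₀ (t / l) ∂α) / ∫ t, ramp u₀ v₀ t ∂α with hφdef
    have hφ : ∀ l : ℝ, l ∈ Set.Ioo (0 : ℝ) 1 →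
        Tendsto (fun n : ℕ => PS c ⌊(n : ℝ) * l⌋₊ / PS c n) atTop (𝓝 (φ l)) :=
      fun l hl => key_conv hc hSpos hv₀1 huv₀ α hweak' hIpos hl.1 hl.2
    -- monotonicity and bound of φ
    have hφmono : ∀ a b : ℝ, a ∈ Set.Ioo (0:ℝ) 1 → b ∈ Set.Ioo (0:ℝ) 1 → a ≤ b → φ a ≤ φ b := by
      intro a b ha hb hab
      refine le_of_tendsto_of_tendsto (hφ a ha) (hφ b hb) ?_
      filter_upwards [hSpos] with n hSn
      refine div_le_div_of_nonneg_right (hSmono (Nat.floor_le_floor ?_)) hSn.le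
      have : (0:ℝ) ≤ n := Nat.cast_nonneg n
      nlinarith
    have hφle1 : ∀ a ∈ Set.Ioo (0:ℝ) 1, φ a ≤ 1 := by
      intro a ha
      refine le_of_tendsto (hφ a ha) ?_
      filter_upwards [hSpos] with n hSn
      rw [div_le_one hSn]
      refine hSmono ?_
      calc ⌊(n : ℝ) * a⌋₊ ≤ ⌊(n : ℝ)⌋₊ := by
            apply Nat.floor_le_floor
            have : (0:ℝ) ≤ n := Nat.cast_nonneg n
            nlinarith [ha.2, ha.1]
        _ = n := Nat.floor_natCast n
    -- sandwich between F and φ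
    have hsand1 : ∀ u v : ℝ, 0 < u → u < v → v < 1 → F u ≤ φ v := by
      intro u v hu huv hv1
      have h1 : (∫ t, ramp u v t ∂α) ≤ φ v := by
        refine le_of_tendsto_of_tendsto (hIr u v huv) (hφ v ⟨lt_trans hu huv, hv1⟩) ?_
        filter_upwards [hAnbounds u v hu huv (by linarith)] with n hn
        exact hn.2
      exact (le_integral_ramp huv α).trans h1
    have hsand2 : ∀ u v : ℝ, 0 < u → u < v → u < 1 → φ u ≤ F v := by
      intro u v hu huv hu1
      have h1 : φ u ≤ ∫ t, ramp u v t ∂α := by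
        refine le_of_tendsto_of_tendsto (hφ u ⟨hu, hu1⟩) (hIr u v huv) ?_
        filter_upwards [hAnbounds u v hu huv hu1.le] with n hn
        exact hn.1
      exact h1.trans (integral_ramp_le huv α)
    -- multiplicativity of φ
    have hφmul : ∀ a ∈ Set.Ioo (0:ℝ) 1, ∀ b ∈ Set.Ioo (0:ℝ) 1, φ (a * b) = φ a * φ b := by
      intro a ha b hb
      have habm : a * b ∈ Set.Ioo (0:ℝ) 1 := ⟨mul_pos ha.1 hb.1, by nlinarith [ha.1, ha.2, hb.1, hb.2]⟩
      set ms : ℕ → ℕ := fun n => ⌊(n : ℝ) * a⌋₊ with hmsdef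
      have hmstop : Tendsto ms atTop atTop :=
        tendsto_nat_floor_atTop.comp (Tendsto.atTop_mul_const ha.1 tendsto_natCast_atTop_atTop)
      set us : ℕ → ℕ := fun n => ⌊((ms n : ℕ) : ℝ) * b⌋₊ with husdef
      have hustop : Tendsto us atTop atTop :=
        (tendsto_nat_floor_atTop.comp (Tendsto.atTop_mul_const hb.1
          tendsto_natCast_atTop_atTop)).comp hmstop
      have hB : Tendsto (fun n => PS c (us n) / PS c (ms n)) atTop (𝓝 (φ b)) :=
        (hφ b hb).comp hmstop
      have hC : Tendsto (fun n => PS c (ms n) / PS c n) atTop (𝓝 (φ a)) := hφ a ha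
      have hA1 : Tendsto (fun n : ℕ => PS c ⌊(n : ℝ) * (a * b)⌋₊ / PS c (us n)) atTop (𝓝 1) := by
        refine ratio_sandwich hSmono hSpos hr hustop ?_ (k := 1) ?_
        · refine Eventually.of_forall (fun n => Nat.floor_le_floor ?_)
          have h1 : (ms n : ℝ) ≤ (n : ℝ) * a :=
            Nat.floor_le (mul_nonneg (Nat.cast_nonneg n) ha.1.le)
          have := hb.1
          nlinarith
        · refine Eventually.of_forall (fun n => ?_)
          have h1 : (n : ℝ) * a < (ms n : ℝ) + 1 := Nat.lt_floor_add_one _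
          have h2 : (n : ℝ) * (a * b) ≤ (ms n : ℝ) * b + 1 := by nlinarith [hb.1, hb.2]
          calc ⌊(n : ℝ) * (a * b)⌋₊ ≤ ⌊(ms n : ℝ) * b + 1⌋₊ := Nat.floor_le_floor h2
            _ = us n + 1 := by
                rw [husdef]
                exact_mod_cast Nat.floor_add_one (mul_nonneg (Nat.cast_nonneg _) hb.1.le)
      have evprod : ∀ᶠ n : ℕ in atTop,
          (PS c ⌊(n : ℝ) * (a * b)⌋₊ / PS c (us n)) * (PS c (us n) / PS c (ms n))
              * (PS c (ms n) / PS c n)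
            = PS c ⌊(n : ℝ) * (a * b)⌋₊ / PS c n := by
        filter_upwards [hustop.eventually hSpos, hmstop.eventually hSpos] with n h1 h2
        field_simp
      have hlim := ((hA1.mul hB).mul hC).congr' evprod
      rw [one_mul] at hlim
      rw [tendsto_nhds_unique (hφ (a * b) habm) hlim, mul_comm]
    -- positivity of φ
    have hφpos : ∀ a ∈ Set.Ioo (0:ℝ) 1, 0 < φ a := by
      intro a ha
      have hnear : ∀ w : ℝ, u₀ < w → w < 1 → 0 < φ w := fun w h1 h2 =>
        lt_of_lt_of_le hFu₀ (hsand1 u₀ w hu₀.1 h1 h2)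
      obtain ⟨k, hk⟩ : ∃ k : ℕ, u₀ < a ^ ((1/2 : ℝ) ^ k) := by
        have hcont : ContinuousAt (fun e : ℝ => a ^ e) 0 :=
          Real.continuousAt_const_rpow ha.1.ne'
        have h0 : Tendsto (fun k : ℕ => a ^ ((1/2 : ℝ) ^ k)) atTop (𝓝 (a ^ (0:ℝ))) :=
          (hcont.tendsto).comp
            (tendsto_pow_atTop_nhds_zero_of_lt_one (by norm_num) (by norm_num))
        rw [Real.rpow_zero] at h0
        exact (h0.eventually_const_lt hu₀.2).exists
      set w : ℝ := a ^ ((1/2 : ℝ) ^ k) with hwdef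
      have hw0 : 0 < w := Real.rpow_pos_of_pos ha.1 _
      have hw1 : w < 1 := Real.rpow_lt_one ha.1.le ha.2 (by positivity)
      have hpow : ∀ j : ℕ, w ^ (2^j : ℕ) ∈ Set.Ioo (0:ℝ) 1 ∧
          φ (w ^ (2^j : ℕ)) = (φ w) ^ (2^j : ℕ) := by
        intro j
        induction j with
        | zero =>
          simp only [pow_zero, pow_one]
          exact ⟨⟨hw0, hw1⟩, trivial⟩
        | succ j ih =>
          have h2 : (2:ℕ) ^ (j+1) = 2^j + 2^j := by ring
          have h3 : w ^ (2^(j+1) : ℕ) = w ^ (2^j : ℕ) * w ^ (2^j : ℕ) := by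
            rw [h2, pow_add]
          have hmem : w ^ (2^(j+1) : ℕ) ∈ Set.Ioo (0:ℝ) 1 := by
            rw [h3]
            constructor
            · exact mul_pos ih.1.1 ih.1.1
            · nlinarith [ih.1.1, ih.1.2]
          refine ⟨hmem, ?_⟩
          rw [h3, hφmul _ ih.1 _ ih.1, ih.2, h2, pow_add]
      have hwk : w ^ (2^k : ℕ) = a := by
        rw [hwdef, ← Real.rpow_natCast (a ^ ((1/2 : ℝ) ^ k)) (2^k), ← Real.rpow_mul ha.1.le]
        have : (1/2 : ℝ) ^ k * ((2^k : ℕ) : ℝ) = 1 := by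
          push_cast
          rw [← mul_pow]
          norm_num
        rw [this, Real.rpow_one]
      have h4 := (hpow k).2
      rw [hwk] at h4
      rw [h4]
      exact pow_pos (hnear w hk hw1) _
    -- solve the functional equation
    obtain ⟨ρ₀, hρ₀nonneg, hφeq⟩ := mul_to_rpow φ hφmono hφpos hφle1 hφmul
    -- F values on (0,1]
    have hF1 : F 1 = 1 := by
      have h1 : α (Set.Iic 1) = 1 := le_antisymm prob_le_one
        (hα_supp ▸ measure_mono Set.Icc_subset_Iic_self)
      rw [hFdef]
      simp [h1]
    have hFval : ∀ x ∈ Set.Ioc (0:ℝ) 1, F x = x ^ ρ₀ := by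
      intro x hx
      rcases eq_or_lt_of_le hx.2 with h1 | h1
      · rw [h1, hF1, Real.one_rpow]
      · apply le_antisymm
        · have hcont : Tendsto (fun v : ℝ => v ^ ρ₀) (𝓝[>] x) (𝓝 (x ^ ρ₀)) :=
            ((Real.continuousAt_rpow_const x ρ₀ (Or.inl hx.1.ne')).continuousWithinAt).tendsto
          refine ge_of_tendsto hcont ?_
          have hev : ∀ᶠ v in 𝓝[>] x, v ∈ Set.Ioo x 1 :=
            Ioo_mem_nhdsGT_of_mem ⟨le_refl x, h1⟩
          filter_upwards [hev] with v hv
          rw [← hφeq v ⟨lt_trans hx.1 hv.1, hv.2⟩]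
          exact hsand1 x v hx.1 hv.1 hv.2
        · have hcont : Tendsto (fun u : ℝ => u ^ ρ₀) (𝓝[<] x) (𝓝 (x ^ ρ₀)) :=
            ((Real.continuousAt_rpow_const x ρ₀ (Or.inl hx.1.ne')).continuousWithinAt).tendsto
          refine le_of_tendsto hcont ?_
          have hev : ∀ᶠ u in 𝓝[<] x, u ∈ Set.Ioo 0 x :=
            Ioo_mem_nhdsLT_of_mem ⟨hx.1, le_refl x⟩
          filter_upwards [hev] with u hu
          rw [← hφeq u ⟨hu.1, lt_trans hu.2 h1⟩]
          exact hsand2 u x hu.1 hu.2 (lt_trans hu.2 h1)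
    -- integer-indexed regular variation
    have hint : ∀ x : ℝ, 0 < x →
        Tendsto (fun n : ℕ => PS c ⌊(n : ℝ) * x⌋₊ / PS c n) atTop (𝓝 (x ^ ρ₀)) := by
      intro x hx
      rcases lt_trichotomy x 1 with h1 | h1 | h1
      · rw [← hφeq x ⟨hx, h1⟩]
        exact hφ x ⟨hx, h1⟩
      · subst h1
        rw [Real.one_rpow]
        refine Tendsto.congr' ?_ tendsto_const_nhds
        filter_upwards [hSpos] with n hSn
        rw [mul_one, Nat.floor_natCast, div_self hSn.ne']
      · set lam : ℝ := x⁻¹ with hlamdef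
        have hlam : lam ∈ Set.Ioo (0:ℝ) 1 := ⟨inv_pos.2 hx, inv_lt_one_of_one_lt₀ h1⟩
        set ms : ℕ → ℕ := fun n => ⌊(n : ℝ) * x⌋₊ with hmsdef
        have hmstop : Tendsto ms atTop atTop :=
          tendsto_nat_floor_atTop.comp (Tendsto.atTop_mul_const hx tendsto_natCast_atTop_atTop)
        set us : ℕ → ℕ := fun n => ⌊((ms n : ℕ) : ℝ) * lam⌋₊ with husdef
        have hustop : Tendsto us atTop atTop :=
          (tendsto_nat_floor_atTop.comp (Tendsto.atTop_mul_const hlam.1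
            tendsto_natCast_atTop_atTop)).comp hmstop
        have hB : Tendsto (fun n => PS c (us n) / PS c (ms n)) atTop (𝓝 (lam ^ ρ₀)) := by
          have := (hφ lam hlam).comp hmstop
          rw [hφeq lam hlam] at this
          exact this
        have hA1 : Tendsto (fun n : ℕ => PS c n / PS c (us n)) atTop (𝓝 1) := by
          refine ratio_sandwich hSmono hSpos hr hustop ?_ (k := 1) ?_
          · refine Eventually.of_forall (fun n => ?_)
            have h2 : (ms n : ℝ) * lam ≤ (n : ℝ) := by
              have h3 : (ms n : ℝ) ≤ (n : ℝ) * x := Nat.floor_le (by positivity)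
              have h4 : (0:ℝ) < lam := hlam.1
              calc (ms n : ℝ) * lam ≤ ((n : ℝ) * x) * lam := by nlinarith
                _ = (n : ℝ) := by
                    rw [hlamdef, mul_assoc, mul_inv_cancel₀ hx.ne', mul_one]
            calc us n ≤ ⌊(n:ℝ)⌋₊ := Nat.floor_le_floor h2
              _ = n := Nat.floor_natCast n
          · filter_upwards [eventually_ge_atTop 1] with n hn1
            have h2 : ((n - 1 : ℕ) : ℝ) ≤ (ms n : ℝ) * lam := by
              have h3 : (n : ℝ) * x < (ms n : ℝ) + 1 := Nat.lt_floor_add_one _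
              have h4 : ((n - 1 : ℕ) : ℝ) = (n : ℝ) - 1 := by
                have : (1:ℕ) ≤ n := hn1
                push_cast [Nat.cast_sub this]
                ring
              rw [h4]
              have h5 : (0:ℝ) < lam := hlam.1
              have h6 : lam < 1 := hlam.2
              have h7 : ((n : ℝ) * x) * lam = (n : ℝ) := by
                rw [hlamdef, mul_assoc, mul_inv_cancel₀ hx.ne', mul_one]
              nlinarith
            have h8 : n - 1 ≤ us n := Nat.le_floor h2
            omega
        have hprod := hA1.mul hB
        rw [one_mul] at hprod
        have hev : ∀ᶠ n : ℕ in atTop,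
            (PS c n / PS c (us n)) * (PS c (us n) / PS c (ms n))
              = PS c n / PS c (ms n) := by
          filter_upwards [hustop.eventually hSpos] with n h1
          field_simp
        have h2 := hprod.congr' hev
        have hlampos : 0 < lam ^ ρ₀ := Real.rpow_pos_of_pos hlam.1 _
        have h3 := h2.inv₀ hlampos.ne'
        have h4 : (lam ^ ρ₀)⁻¹ = x ^ ρ₀ := by
          rw [hlamdef, Real.inv_rpow hx.le, inv_inv]
        rw [h4] at h3
        refine h3.congr (fun n => ?_)
        rw [inv_div]
    -- real-indexed regular variation
    have hreal : ∀ x : ℝ, 0 < x →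
        Tendsto (fun t : ℝ => PS c ⌊t * x⌋₊ / PS c ⌊t⌋₊) atTop (𝓝 (x ^ ρ₀)) := by
      intro x hx
      have hn : Tendsto (fun t : ℝ => ⌊t⌋₊) atTop atTop := tendsto_nat_floor_atTop
      set u : ℝ → ℕ := fun t => ⌊((⌊t⌋₊ : ℕ) : ℝ) * x⌋₊ with hudef
      have hutop : Tendsto u atTop atTop :=
        (tendsto_nat_floor_atTop.comp (Tendsto.atTop_mul_const hx
          tendsto_natCast_atTop_atTop)).comp hn
      have hF2 : Tendsto (fun t : ℝ => PS c (u t) / PS c ⌊t⌋₊) atTop (𝓝 (x ^ ρ₀)) :=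
        (hint x hx).comp hn
      have hF1 : Tendsto (fun t : ℝ => PS c ⌊t * x⌋₊ / PS c (u t)) atTop (𝓝 1) := by
        refine ratio_sandwich hSmono hSpos hr hutop ?_ (k := ⌊x⌋₊ + 1) ?_
        · filter_upwards [eventually_ge_atTop (0:ℝ)] with t ht
          refine Nat.floor_le_floor ?_
          have h1 : ((⌊t⌋₊ : ℕ) : ℝ) ≤ t := Nat.floor_le ht
          nlinarith
        · filter_upwards [eventually_ge_atTop (0:ℝ)] with t ht
          have h1 : t < ((⌊t⌋₊ : ℕ) : ℝ) + 1 := Nat.lt_floor_add_one t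
          have h2 : t * x ≤ ((⌊t⌋₊ : ℕ) : ℝ) * x + x := by nlinarith
          calc ⌊t * x⌋₊ ≤ ⌊((⌊t⌋₊ : ℕ) : ℝ) * x + x⌋₊ := Nat.floor_le_floor h2
            _ ≤ ⌊((⌊t⌋₊ : ℕ) : ℝ) * x⌋₊ + ⌊x⌋₊ + 1 := floor_add_le_aux (by positivity) hx.le
            _ = u t + (⌊x⌋₊ + 1) := by rw [hudef]; ring
      have hprod := hF1.mul hF2
      rw [one_mul] at hprod
      refine hprod.congr' ?_
      filter_upwards [hutop.eventually hSpos] with t h1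
      field_simp
    refine ⟨ENNReal.ofReal ρ₀, ?_, ?_⟩
    · intro _
      rw [ENNReal.toReal_ofReal hρ₀nonneg]
      exact ⟨hFval, hreal⟩
    · intro hcon
      exact absurd hcon ENNReal.ofReal_ne_top
  · -- CASE B : infinite index
    push_neg at hA
    have hF0 : ∀ u : ℝ, u ∈ Set.Ioo (0:ℝ) 1 → F u = 0 := fun u hu =>
      le_antisymm (hA u hu) (hFnonneg u)
    have hB1 : ∀ x : ℝ, x ∈ Set.Ico (0:ℝ) 1 → F x = 0 := by
      intro x hx
      have h1 : (x + 1) / 2 ∈ Set.Ioo (0:ℝ) 1 := ⟨by linarith [hx.1], by linarith [hx.2]⟩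
      have h2 : F x ≤ F ((x + 1) / 2) := hFmono _ _ (by linarith [hx.1, hx.2])
      rw [hF0 _ h1] at h2
      exact le_antisymm h2 (hFnonneg x)
    have hB2 : ∀ l : ℝ, l ∈ Set.Ioo (0:ℝ) 1 →
        Tendsto (fun n : ℕ => PS c ⌊(n : ℝ) * l⌋₊ / PS c n) atTop (𝓝 0) := by
      intro l hl
      set v₀ : ℝ := (l + 1) / 2 with hv₀def
      have hlv : l < v₀ := by rw [hv₀def]; linarith [hl.2]
      have hv₀1 : v₀ < 1 := by rw [hv₀def]; linarith [hl.2]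
      have hI0 : (∫ t, ramp l v₀ t ∂α) = 0 := by
        refine le_antisymm ?_ (integral_nonneg (ramp_nonneg l v₀))
        have := integral_ramp_le hlv α
        rw [show (α (Set.Iic v₀)).toReal = F v₀ from rfl, hF0 v₀ ⟨by linarith [hl.1], hv₀1⟩] at this
        exact this
      have hup : Tendsto (fun n : ℕ => ∑ i ∈ Finset.Icc 1 n,
          ramp l v₀ ((i : ℝ) / (n : ℝ)) * (c i / PS c n)) atTop (𝓝 0) := by
        have := hIr l v₀ hlv
        rwa [hI0] at this
      refine tendsto_of_tendsto_of_tendsto_of_le_of_le' tendsto_const_nhds hup ?_ ?_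
      · filter_upwards [hSpos] with n hSn
        exact div_nonneg (PS_nonneg hc _) hSn.le
      · filter_upwards [hAnbounds l v₀ hl.1 hlv hl.2.le] with n hn
        exact hn.1
    have hB3 : ∀ l : ℝ, l ∈ Set.Ioo (0:ℝ) 1 →
        Tendsto (fun t : ℝ => PS c ⌊t * l⌋₊ / PS c ⌊t⌋₊) atTop (𝓝 0) := by
      intro l hl
      set l' : ℝ := (l + 1) / 2 with hl'def
      have hll' : l < l' := by rw [hl'def]; linarith [hl.2]
      have hl'1 : l' < 1 := by rw [hl'def]; linarith [hl.2]
      have hn : Tendsto (fun t : ℝ => ⌊t⌋₊) atTop atTop := tendsto_nat_floor_atTop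
      have hup : Tendsto (fun t : ℝ => PS c ⌊((⌊t⌋₊ : ℕ) : ℝ) * l'⌋₊ / PS c ⌊t⌋₊) atTop
          (𝓝 0) := (hB2 l' ⟨by linarith [hl.1], hl'1⟩).comp hn
      refine tendsto_of_tendsto_of_tendsto_of_le_of_le' tendsto_const_nhds hup ?_ ?_
      · filter_upwards [hn.eventually hSpos] with t hSn
        exact div_nonneg (PS_nonneg hc _) hSn.le
      · filter_upwards [hn.eventually hSpos,
          eventually_ge_atTop (l / (l' - l) + 1), eventually_ge_atTop (0:ℝ)] with t hSn ht h0
        refine div_le_div_of_nonneg_right (hSmono (Nat.floor_le_floor ?_)) hSn.le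
        have h1 : t < ((⌊t⌋₊ : ℕ) : ℝ) + 1 := Nat.lt_floor_add_one t
        have h2 : l / (l' - l) ≤ ((⌊t⌋₊ : ℕ) : ℝ) := by
          have h3 : t - 1 ≤ ((⌊t⌋₊ : ℕ) : ℝ) := by linarith
          linarith
        have h4 : 0 < l' - l := by linarith
        have h5 : l ≤ ((⌊t⌋₊ : ℕ) : ℝ) * (l' - l) := by
          rw [div_le_iff₀ h4] at h2
          linarith
        nlinarith [hl.1]
    have hB4 : ∀ x : ℝ, 1 < x →
        Tendsto (fun t : ℝ => PS c ⌊t * x⌋₊ / PS c ⌊t⌋₊) atTop atTop := by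
      intro x hx1
      have hx : (0:ℝ) < x := by linarith
      have hinv : x⁻¹ ∈ Set.Ioo (0:ℝ) 1 := ⟨inv_pos.2 hx, inv_lt_one_of_one_lt₀ hx1⟩
      have hg : Tendsto (fun t : ℝ => PS c ⌊t⌋₊ / PS c ⌊t * x⌋₊) atTop (𝓝 0) := by
        have hcomp := (hB3 x⁻¹ hinv).comp
          (Tendsto.atTop_mul_const hx (tendsto_id (α := ℝ)))
        refine Tendsto.congr (fun t => ?_) hcomp
        simp only [Function.comp_apply, id_eq]
        rw [mul_assoc, mul_inv_cancel₀ hx.ne', mul_one]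
      have hgpos : ∀ᶠ t in atTop, 0 < PS c ⌊t⌋₊ / PS c ⌊t * x⌋₊ := by
        have hntop : Tendsto (fun t : ℝ => ⌊t⌋₊) atTop atTop := tendsto_nat_floor_atTop
        have hmtop : Tendsto (fun t : ℝ => ⌊t * x⌋₊) atTop atTop :=
          tendsto_nat_floor_atTop.comp (Tendsto.atTop_mul_const hx (tendsto_id (α := ℝ)))
        filter_upwards [hntop.eventually hSpos, hmtop.eventually hSpos] with t h1 h2
        exact div_pos h1 h2
      have := tendsto_inv_nhdsGT_zero.comp (tendsto_nhdsWithin_iff.2 ⟨hg, hgpos⟩)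
      refine this.congr (fun t => ?_)
      simp only [Function.comp_apply]
      rw [inv_div]
    refine ⟨⊤, fun hcon => absurd rfl hcon, fun _ => ⟨hB1, ?_, hB4⟩⟩
    intro l hl
    exact hB3 l hl
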